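/- Let p be an odd prime and let ζ ∈ ℤ_p be a primitive (p−1)-st root of unity. In V := ℚ_p[X]/(X^p) with x the class of X, set s_i := 1 − Σ_{m=0}^{p−1} C(ζ^i, m)(−x)^m (the truncation mod X^p of 1 − (1−x)^{ζ^i}). Then for every integer n ≥ 1, in the element Σ_{i=0}^{p−2} (s_i)^n ∈ V the coefficients of x^a vanish for all 0 ≤ a ≤ p−2; that is, Σ_{i=0}^{p−2} (s_i)^n is a ℚ_p-scalar multiple of x^{p−1}. -/

import Mathlib

open Polynomial

set_option synthInstance.maxHeartbeats 1000000

noncomputable def pbinom (p : ℕ) [Fact p.Prime] (y : ℚ_[p]) (n : ℕ) : ℚ_[p] :=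
  (descPochhammer ℚ_[p] n).eval y / (n.factorial : ℚ_[p])

noncomputable abbrev TruncV (p : ℕ) [Fact p.Prime] : Type :=
  Polynomial ℚ_[p] ⧸ Ideal.span {(Polynomial.X : Polynomial ℚ_[p]) ^ p}

noncomputable def xV (p : ℕ) [Fact p.Prime] : TruncV p :=
  Ideal.Quotient.mk _ Polynomial.X

/-- `s_i = 1 - (1-x)^{ζ^i}` truncated mod `X^p`. -/
noncomputable def sElt (p : ℕ) [Fact p.Prime] (ζ : ℤ_[p]) (i : ℕ) : TruncV p :=
  1 - ∑ m ∈ Finset.range p, pbinom p ((ζ : ℚ_[p]) ^ i) m • (-xV p) ^ m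

noncomputable def binomPoly (p : ℕ) [Fact p.Prime] (m : ℕ) : Polynomial ℚ_[p] :=
  C ((m.factorial : ℚ_[p])⁻¹) * descPochhammer ℚ_[p] m

noncomputable def Bpoly (p : ℕ) [Fact p.Prime] : Polynomial (Polynomial ℚ_[p]) :=
  1 - ∑ m ∈ Finset.range p, C (binomPoly p m) * (- X) ^ m

noncomputable def Ppoly (p : ℕ) [Fact p.Prime] (y : ℚ_[p]) : Polynomial ℚ_[p] :=
  1 - ∑ m ∈ Finset.range p, C (pbinom p y m) * (- X) ^ m

lemma binomPoly_eval (p : ℕ) [Fact p.Prime] (m : ℕ) (y : ℚ_[p]) :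
    (binomPoly p m).eval y = pbinom p y m := by
  simp [binomPoly, pbinom, div_eq_inv_mul]

lemma Bpoly_map (p : ℕ) [Fact p.Prime] (y : ℚ_[p]) :
    (Bpoly p).map (evalRingHom y) = Ppoly p y := by
  simp [Bpoly, Ppoly, Polynomial.map_sub, Polynomial.map_sum, Polynomial.map_mul,
    Polynomial.map_pow, Polynomial.map_neg, binomPoly_eval]

def Good (p : ℕ) [Fact p.Prime] (a : ℕ) (g : Polynomial ℚ_[p]) : Prop :=
  g.coeff 0 = 0 ∧ g.natDegree ≤ a

lemma good_mul {p : ℕ} [Fact p.Prime] {a b : ℕ} {g h : Polynomial ℚ_[p]}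
    (hg : Good p a g) (hh : Good p b h) : Good p (a + b) (g * h) :=
  ⟨by rw [mul_coeff_zero, hg.1, zero_mul],
   (natDegree_mul_le).trans (add_le_add hg.2 hh.2)⟩

lemma good_B_coeff (p : ℕ) [Fact p.Prime] (a : ℕ) : Good p a ((Bpoly p).coeff a) := by
  have hre : ∀ m : ℕ, (C (binomPoly p m) * (-X : Polynomial (Polynomial ℚ_[p])) ^ m)
      = C ((-1) ^ m * binomPoly p m) * X ^ m := by
    intro m
    have h1 : (C ((-1:Polynomial ℚ_[p])^m) : Polynomial (Polynomial ℚ_[p])) = (-1)^m := by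
      simp
    have h2 : (-X : Polynomial (Polynomial ℚ_[p]))^m = (-1)^m * X^m := by
      exact neg_pow (X : Polynomial (Polynomial ℚ_[p])) m
    rw [map_mul, h1, h2]
    ring
  have hc : (Bpoly p).coeff a =
      (if a = 0 then 1 else 0) - if a < p then (-1) ^ a * binomPoly p a else 0 := by
    rw [Bpoly, coeff_sub, coeff_one]
    congr 1
    rw [Finset.sum_congr rfl (fun m _ => hre m), finset_sum_coeff]
    simp only [coeff_C_mul, coeff_X_pow]
    simp only [mul_ite, mul_one, mul_zero]
    rw [Finset.sum_ite_eq]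
    simp [Finset.mem_range]
  rcases Nat.eq_zero_or_pos a with rfl | ha
  · have hp0 : 0 < p := (Fact.out : p.Prime).pos
    have hz : (Bpoly p).coeff 0 = 0 := by
      rw [hc]; simp [binomPoly, hp0]
    rw [hz]; exact ⟨by simp, by simp⟩
  · rw [hc, if_neg (by omega), zero_sub]
    by_cases hap : a < p
    · rw [if_pos hap]
      constructor
      · have h0 : (binomPoly p a).coeff 0 = 0 := by
          rw [coeff_zero_eq_eval_zero, binomPoly_eval, pbinom]
          rw [descPochhammer_eval_zero, if_neg (by omega), zero_div]
        simp [h0]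
      · rw [natDegree_neg]
        calc ((-1:Polynomial ℚ_[p])^a * binomPoly p a).natDegree
            ≤ ((-1:Polynomial ℚ_[p])^a).natDegree + (binomPoly p a).natDegree :=
              natDegree_mul_le
          _ ≤ a := by
              have h1 : ((-1:Polynomial ℚ_[p])^a).natDegree = 0 := by
                simp [natDegree_pow]
              have h2 : (binomPoly p a).natDegree ≤ a := by
                refine natDegree_mul_le.trans ?_
                simp [descPochhammer_natDegree]
              omega
    · rw [if_neg hap]
      exact ⟨by simp, by simp⟩

lemma good_pow (p : ℕ) [Fact p.Prime] (n : ℕ) (hn : 1 ≤ n) (a : ℕ) :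
    Good p a ((Bpoly p ^ n).coeff a) := by
  induction n, hn using Nat.le_induction generalizing a with
  | base => simpa using good_B_coeff p a
  | succ n hn ih =>
    rw [pow_succ, coeff_mul]
    constructor
    · rw [finset_sum_coeff]
      refine Finset.sum_eq_zero fun x hx => ?_
      rw [mul_coeff_zero, (ih x.1).1, zero_mul]
    · refine natDegree_sum_le_of_forall_le _ _ fun x hx => ?_
      have := good_mul (ih x.1) (good_B_coeff p x.2)
      rw [Finset.HasAntidiagonal.mem_antidiagonal] at hx
      exact hx ▸ this.2

lemma sum_eval_zero (p : ℕ) [Fact p.Prime] (ζ : ℤ_[p])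
    (hζ : ζ ^ (p - 1) = 1) (hord : orderOf ζ = p - 1)
    {a : ℕ} (ha : a + 1 < p) {g : Polynomial ℚ_[p]} (hg : Good p a g) :
    ∑ i ∈ Finset.range (p - 1), g.eval ((ζ : ℚ_[p]) ^ i) = 0 := by
  have hdeg : g.natDegree < p - 1 := lt_of_le_of_lt hg.2 (by omega)
  have hev : ∀ i : ℕ, g.eval ((ζ : ℚ_[p]) ^ i)
      = ∑ k ∈ Finset.range (p - 1), g.coeff k * ((ζ : ℚ_[p]) ^ i) ^ k :=
    fun i => eval_eq_sum_range' hdeg _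
  rw [Finset.sum_congr rfl (fun i _ => hev i), Finset.sum_comm]
  refine Finset.sum_eq_zero fun k hk => ?_
  rcases Nat.eq_zero_or_pos k with rfl | hk0
  · simp [hg.1]
  · rw [Finset.mem_range] at hk
    have hne : ((ζ : ℚ_[p]) ^ k) ≠ 1 := by
      intro h
      have : ζ ^ k = 1 := by
        apply Subtype.coe_injective
        push_cast
        exact h
      have := orderOf_dvd_iff_pow_eq_one.mpr this
      rw [hord] at this
      have := Nat.le_of_dvd hk0 this
      omega
    have hone : ((ζ : ℚ_[p]) ^ k) ^ (p - 1) = 1 := by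
      rw [pow_right_comm]
      have : ((ζ : ℚ_[p]) ^ (p - 1)) = 1 := by
        have := congrArg (fun z : ℤ_[p] => (z : ℚ_[p])) hζ
        push_cast at this
        exact this
      rw [this, one_pow]
    have := geom_sum_eq hne (p - 1)
    calc ∑ i ∈ Finset.range (p - 1), g.coeff k * ((ζ : ℚ_[p]) ^ i) ^ k
        = g.coeff k * ∑ i ∈ Finset.range (p - 1), ((ζ : ℚ_[p]) ^ k) ^ i := by
          rw [Finset.mul_sum]
          exact Finset.sum_congr rfl fun i _ => by rw [pow_right_comm]
      _ = 0 := by rw [this, hone, sub_self, zero_div, mul_zero]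

lemma mk_C_mul (p : ℕ) [Fact p.Prime] (c : ℚ_[p]) (q : Polynomial ℚ_[p]) :
    Ideal.Quotient.mk (Ideal.span {(X : Polynomial ℚ_[p]) ^ p}) (C c * q)
      = c • Ideal.Quotient.mk (Ideal.span {(X : Polynomial ℚ_[p]) ^ p}) q := by
  rw [← Polynomial.smul_eq_C_mul]
  exact map_smul (Ideal.Quotient.mkₐ ℚ_[p] _) c q

lemma sElt_eq (p : ℕ) [Fact p.Prime] (ζ : ℤ_[p]) (i : ℕ) :
    sElt p ζ i
      = Ideal.Quotient.mk (Ideal.span {(X : Polynomial ℚ_[p]) ^ p})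
          (Ppoly p ((ζ : ℚ_[p]) ^ i)) := by
  rw [sElt, Ppoly, map_sub, map_one, map_sum]
  congr 1
  refine Finset.sum_congr rfl fun m _ => ?_
  rw [mk_C_mul, map_pow, map_neg]
  rfl

/-- For every `n ≥ 1`, the sum `Σ_{i=0}^{p-2} s_i^n` is a scalar multiple of `x^{p-1}`:
its coefficients in degrees `0 ≤ a ≤ p-2` all vanish. -/
theorem sum_pow_multiple_of_top (p : ℕ) [Fact p.Prime] (hp : Odd p) (ζ : ℤ_[p])
    (hζ : ζ ^ (p - 1) = 1) (hord : orderOf ζ = p - 1)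
    (n : ℕ) (hn : 1 ≤ n) :
    ∃ c : ℚ_[p],
      ∑ i ∈ Finset.range (p - 1), (sElt p ζ i) ^ n = c • xV p ^ (p - 1) := by
  have hp2 : 2 ≤ p := (Fact.out : p.Prime).two_le
  set F : Polynomial ℚ_[p] :=
    ∑ i ∈ Finset.range (p - 1), (Ppoly p ((ζ : ℚ_[p]) ^ i)) ^ n with hF
  have hco : ∀ a < p - 1, F.coeff a = 0 := by
    intro a ha
    rw [hF, finset_sum_coeff]
    have hx : ∀ i : ℕ, ((Ppoly p ((ζ : ℚ_[p]) ^ i)) ^ n).coeff a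
        = ((Bpoly p ^ n).coeff a).eval ((ζ : ℚ_[p]) ^ i) := by
      intro i
      rw [← Bpoly_map, ← Polynomial.map_pow, coeff_map]
      rfl
    rw [Finset.sum_congr rfl (fun i _ => hx i)]
    exact sum_eval_zero p ζ hζ hord (by omega) (good_pow p n hn a)
  refine ⟨F.coeff (p - 1), ?_⟩
  have hstep : ∑ i ∈ Finset.range (p - 1), (sElt p ζ i) ^ n
      = Ideal.Quotient.mk (Ideal.span {(X : Polynomial ℚ_[p]) ^ p}) F := by
    rw [hF, map_sum]
    exact Finset.sum_congr rfl fun i _ => by rw [sElt_eq, ← map_pow]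
  rw [hstep]
  have hxv : xV p ^ (p - 1)
      = Ideal.Quotient.mk (Ideal.span {(X : Polynomial ℚ_[p]) ^ p}) (X ^ (p - 1)) := by
    rw [xV, ← map_pow]
  rw [hxv, ← mk_C_mul]
  rw [Ideal.Quotient.eq, Ideal.mem_span_singleton]
  rw [Polynomial.X_pow_dvd_iff]
  intro d hd
  rw [coeff_sub, coeff_C_mul, coeff_X_pow]
  rcases eq_or_lt_of_le (Nat.lt_succ_iff.mp (by omega : d < (p-1)+1)) with h | h
  · rw [h, if_pos rfl, mul_one, sub_self]
  · rw [if_neg (by omega), mul_zero, sub_zero, hco d h]
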